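/- Finite model property: if a formula A ∈ For_MBCL is true at some world of some model built on a frame in F_demL, then A is true at some world of a model for MBCL whose set of worlds W is finite with cardinality at most 2^{|Sub(A)|}, where Sub(A) is the (finite) closure of {A} under subformulas, and each of whose relating relations R_w is a finite set of pairs of formulas. -/

import Mathlib

/-- Formulas of MBCL: variables, negation, box, diamond, conjunction,
disjunction, connexive implication. -/
inductive MForm : Type
  | var : ℕ → MForm
  | neg : MForm → MForm
  | box : MForm → MForm
  | dia : MForm → MForm
  | conj : MForm → MForm → MForm
  | disj : MForm → MForm → MForm
  | imp : MForm → MForm → MForm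
  deriving DecidableEq

/-- A model for MBCL: a nonempty set of worlds, an accessibility relation,
a family of relating relations indexed by worlds, and a valuation. -/
structure MModel where
  W : Type
  ne : Nonempty W
  Q : W → W → Prop
  R : W → MForm → MForm → Prop
  v : W → ℕ → Bool

/-- Truth of a formula at a world of an MBCL model. -/
def msat (M : MModel) : M.W → MForm → Prop
  | w, .var p => M.v w p = true
  | w, .neg B => ¬ msat M w B
  | w, .box B => ∀ u, M.Q w u → msat M u B
  | w, .dia B => ∃ u, M.Q w u ∧ msat M u B
  | w, .conj B C => msat M w B ∧ msat M w C
  | w, .disj B C => msat M w B ∨ msat M w C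
  | w, .imp B C => (¬ msat M w B ∨ msat M w C) ∧ M.R w B C

def mcondA1 (R : MForm → MForm → Prop) : Prop := ∀ A, ¬ R A (.neg A)
def mcondA2 (R : MForm → MForm → Prop) : Prop := ∀ A, ¬ R (.neg A) A
def mcondB0 (R : MForm → MForm → Prop) : Prop := ∀ A B, R A B → ¬ R A (.neg B)
def mcondB1 (R : MForm → MForm → Prop) : Prop :=
  ∀ A B, R (.imp A B) (.neg (.imp A (.neg B)))
def mcondB2 (R : MForm → MForm → Prop) : Prop :=
  ∀ A B, R (.imp A (.neg B)) (.neg (.imp A B))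
def mcondCUN (R : MForm → MForm → Prop) : Prop := ∀ A B, R A B → R (.neg A) (.neg B)

/-- ¬^j A : the formula A prefixed by j negations. -/
def mnegs : ℕ → MForm → MForm
  | 0, A => A
  | n + 1, A => .neg (mnegs n A)
/-- The demodalization function d : it erases all modal operators. -/
def demod : MForm → MForm
  | .var p => .var p
  | .neg A => .neg (demod A)
  | .box A => demod A
  | .dia A => demod A
  | .conj A B => .conj (demod A) (demod B)
  | .disj A B => .disj (demod A) (demod B)
  | .imp A B => .imp (demod A) (demod B)

/-- M is built on a frame in F_demL: at every world the relating relation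
satisfies (a1), (a2), (b0), (b1), (b2), and the family satisfies (dem-L). -/
def MFrameDemL (M : MModel) : Prop :=
  (∀ w : M.W,
    mcondA1 (M.R w) ∧ mcondA2 (M.R w) ∧ mcondB0 (M.R w) ∧ mcondB1 (M.R w) ∧
      mcondB2 (M.R w)) ∧
  ∀ (w : M.W) (A B : MForm), M.R w (demod A) (demod B) → M.R w A B

/-- Sub(A): the (finite) closure of {A} under subformulas. -/
def subf : MForm → Finset MForm
  | .var p => {.var p}
  | .neg A => insert (.neg A) (subf A)
  | .box A => insert (.box A) (subf A)
  | .dia A => insert (.dia A) (subf A)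
  | .conj A B => insert (.conj A B) (subf A ∪ subf B)
  | .disj A B => insert (.disj A B) (subf A ∪ subf B)
  | .imp A B => insert (.imp A B) (subf A ∪ subf B)


lemma mem_subf_self (B : MForm) : B ∈ subf B := by
  cases B <;> simp [subf]

lemma subf_subset {B C : MForm} (h : C ∈ subf B) : subf C ⊆ subf B := by
  induction B with
  | var p => simp [subf] at h; subst h; simp [subf]
  | neg B ih =>
      simp [subf] at h
      rcases h with h | h
      · subst h; exact Finset.Subset.refl _
      · exact (ih h).trans (Finset.subset_insert _ _)
  | box B ih =>
      simp [subf] at h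
      rcases h with h | h
      · subst h; exact Finset.Subset.refl _
      · exact (ih h).trans (Finset.subset_insert _ _)
  | dia B ih =>
      simp [subf] at h
      rcases h with h | h
      · subst h; exact Finset.Subset.refl _
      · exact (ih h).trans (Finset.subset_insert _ _)
  | conj B C ihB ihC =>
      simp [subf] at h
      rcases h with h | h | h
      · subst h; exact Finset.Subset.refl _
      · exact (ihB h).trans ((Finset.subset_union_left).trans (Finset.subset_insert _ _))
      · exact (ihC h).trans ((Finset.subset_union_right).trans (Finset.subset_insert _ _))
  | disj B C ihB ihC =>
      simp [subf] at h
      rcases h with h | h | h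
      · subst h; exact Finset.Subset.refl _
      · exact (ihB h).trans ((Finset.subset_union_left).trans (Finset.subset_insert _ _))
      · exact (ihC h).trans ((Finset.subset_union_right).trans (Finset.subset_insert _ _))
  | imp B C ihB ihC =>
      simp [subf] at h
      rcases h with h | h | h
      · subst h; exact Finset.Subset.refl _
      · exact (ihB h).trans ((Finset.subset_union_left).trans (Finset.subset_insert _ _))
      · exact (ihC h).trans ((Finset.subset_union_right).trans (Finset.subset_insert _ _))

open scoped Classical in
/-- the truth profile of a world, restricted to subformulas of A -/
noncomputable def tvprof (M : MModel) (A : MForm) (w : M.W) : ↥(subf A) → Bool :=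
  fun B => decide (msat M w B.1)

open scoped Classical in
/-- the filtration model -/
noncomputable def filtM (M : MModel) (A : MForm) : MModel where
  W := ↥(subf A) → Bool
  ne := ⟨fun _ => false⟩
  Q f g := ∃ w u : M.W, M.Q w u ∧ f = tvprof M A w ∧ g = tvprof M A u
  R f B C := ∃ h : MForm.imp B C ∈ subf A, f ⟨_, h⟩ = true
  v f p := if h : MForm.var p ∈ subf A then f ⟨_, h⟩ else false

open scoped Classical in
lemma truth_lemma (M : MModel) (A : MForm) :
    ∀ B : MForm, B ∈ subf A → ∀ w : M.W,
      (msat (filtM M A) (tvprof M A w) B ↔ msat M w B) := by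
  intro B
  induction B with
  | var p =>
      intro hB w
      simp only [msat, filtM, tvprof, dif_pos hB, decide_eq_true_iff]
      exact @decide_eq_true_iff _ (Classical.propDecidable _)
  | neg B ih =>
      intro hB w
      have hBm : B ∈ subf A := subf_subset hB (by simp [subf, mem_subf_self])
      simp only [msat]
      rw [ih hBm w]
  | box B ih =>
      intro hB w
      have hBm : B ∈ subf A := subf_subset hB (by simp [subf, mem_subf_self])
      simp only [msat]
      constructor
      · intro hall u hQ
        have : msat (filtM M A) (tvprof M A u) B :=
          hall (tvprof M A u) ⟨w, u, hQ, rfl, rfl⟩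
        exact (ih hBm u).mp this
      · rintro hall g ⟨w', u', hQ, hw, hu⟩
        have heq : tvprof M A w ⟨_, hB⟩ = tvprof M A w' ⟨_, hB⟩ := by rw [hw]
        have hw' : msat M w' (MForm.box B) := by
          have := heq
          simp only [tvprof, decide_eq_decide] at this
          exact this.mp hall
        subst hu
        exact (ih hBm u').mpr (hw' u' hQ)
  | dia B ih =>
      intro hB w
      have hBm : B ∈ subf A := subf_subset hB (by simp [subf, mem_subf_self])
      simp only [msat]
      constructor
      · rintro ⟨g, ⟨w', u', hQ, hw, hu⟩, hg⟩
        subst hu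
        have hu'B : msat M u' B := (ih hBm u').mp hg
        have hw' : msat M w' (MForm.dia B) := ⟨u', hQ, hu'B⟩
        have heq : tvprof M A w ⟨_, hB⟩ = tvprof M A w' ⟨_, hB⟩ := by rw [hw]
        simp only [tvprof, decide_eq_decide] at heq
        exact heq.mpr hw'
      · rintro ⟨u, hQ, hu⟩
        exact ⟨tvprof M A u, ⟨w, u, hQ, rfl, rfl⟩, (ih hBm u).mpr hu⟩
  | conj B C ihB ihC =>
      intro hB w
      have hBm : B ∈ subf A := subf_subset hB (by simp [subf, mem_subf_self])
      have hCm : C ∈ subf A := subf_subset hB (by simp [subf, mem_subf_self])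
      simp only [msat]
      rw [ihB hBm w, ihC hCm w]
  | disj B C ihB ihC =>
      intro hB w
      have hBm : B ∈ subf A := subf_subset hB (by simp [subf, mem_subf_self])
      have hCm : C ∈ subf A := subf_subset hB (by simp [subf, mem_subf_self])
      simp only [msat]
      rw [ihB hBm w, ihC hCm w]
  | imp B C ihB ihC =>
      intro hB w
      have hBm : B ∈ subf A := subf_subset hB (by simp [subf, mem_subf_self])
      have hCm : C ∈ subf A := subf_subset hB (by simp [subf, mem_subf_self])
      have hR : (filtM M A).R (tvprof M A w) B C ↔ msat M w (MForm.imp B C) := by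
        constructor
        · rintro ⟨hmem, hval⟩
          simpa [tvprof] using hval
        · intro hs
          exact ⟨hB, by simp [tvprof, hs]⟩
      simp only [msat]
      rw [ihB hBm w, ihC hCm w, hR]
      constructor
      · rintro ⟨_, h2⟩; exact h2
      · intro hs; exact ⟨hs.1, hs⟩

/-- Finite model property. -/
theorem fmp_demL (A : MForm) (M : MModel) (hM : MFrameDemL M) (w : M.W)
    (h : msat M w A) :
    ∃ (M' : MModel) (w' : M'.W),
      Finite M'.W ∧ Nat.card M'.W ≤ 2 ^ (subf A).card ∧
      (∀ u : M'.W, Set.Finite {p : MForm × MForm | M'.R u p.1 p.2}) ∧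
      msat M' w' A := by
  classical
  refine ⟨filtM M A, tvprof M A w, ?_, ?_, ?_, ?_⟩
  · show Finite (↥(subf A) → Bool); infer_instance
  · have : Nat.card ((filtM M A).W) = 2 ^ (subf A).card := by
      show Nat.card (↥(subf A) → Bool) = _
      simp [Nat.card_eq_fintype_card, Fintype.card_fun, Fintype.card_coe]
    exact le_of_eq this
  · intro u
    apply Set.Finite.subset ((subf A ×ˢ subf A : Finset (MForm × MForm)).finite_toSet)
    rintro ⟨B, C⟩ ⟨hmem, _⟩
    have hBm : B ∈ subf A := subf_subset hmem (by simp [subf, mem_subf_self])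
    have hCm : C ∈ subf A := subf_subset hmem (by simp [subf, mem_subf_self])
    simp [Finset.mem_product, hBm, hCm]
  · exact (truth_lemma M A A (mem_subf_self A) w).mpr h
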